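/- Extra symmetry for equal diffusivities d₁ = d₃ (Theorem 2, finite form of the operator (u+w)∂_w): Suppose d₁ = d₃ and (u, v, w) solves the system S(Ψ; d₁,d₂,d₁; k) on an open set Ω ⊆ ℝ³. Then for every real ε, the triple (u, v, e^ε·w + (e^ε − 1)·u) also solves S(Ψ; d₁,d₂,d₁; k) on Ω. -/

import Mathlib

/-- Partial derivative with respect to `t` of a function of `(t,x,y)`. -/
noncomputable def pdT (f : ℝ × ℝ × ℝ → ℝ) (p : ℝ × ℝ × ℝ) : ℝ := fderiv ℝ f p (1, 0, 0)
/-- Partial derivative with respect to `x`. -/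
noncomputable def pdX (f : ℝ × ℝ × ℝ → ℝ) (p : ℝ × ℝ × ℝ) : ℝ := fderiv ℝ f p (0, 1, 0)
/-- Partial derivative with respect to `y`. -/
noncomputable def pdY (f : ℝ × ℝ × ℝ → ℝ) (p : ℝ × ℝ × ℝ) : ℝ := fderiv ℝ f p (0, 0, 1)
/-- `Ψ_x` for a function of `(x,y)`. -/
noncomputable def psiX (Ψ : ℝ × ℝ → ℝ) (q : ℝ × ℝ) : ℝ := fderiv ℝ Ψ q (1, 0)
/-- `Ψ_y` for a function of `(x,y)`. -/
noncomputable def psiY (Ψ : ℝ × ℝ → ℝ) (q : ℝ × ℝ) : ℝ := fderiv ℝ Ψ q (0, 1)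

/-- `(u,v,w)` solves the convective Lotka–Volterra system `S(Ψ; d₁,d₂,d₃; k)` on `Ω`. -/
def SolvesS (Ψ : ℝ × ℝ → ℝ) (d₁ d₂ d₃ k : ℝ) (u v w : ℝ × ℝ × ℝ → ℝ)
    (Ω : Set (ℝ × ℝ × ℝ)) : Prop :=
  ∀ p ∈ Ω,
    (pdT u p + psiY Ψ p.2 * pdX u p - psiX Ψ p.2 * pdY u p
      = d₁ * (pdX (pdX u) p + pdY (pdY u) p) - k * u p * v p) ∧
    (pdT v p + psiY Ψ p.2 * pdX v p - psiX Ψ p.2 * pdY v p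
      = d₂ * (pdX (pdX v) p + pdY (pdY v) p) - k * u p * v p) ∧
    (pdT w p + psiY Ψ p.2 * pdX w p - psiX Ψ p.2 * pdY w p
      = d₃ * (pdX (pdX w) p + pdY (pdY w) p) + k * u p * v p)

lemma pd_comb (c₁ c₂ : ℝ) (f g : ℝ × ℝ × ℝ → ℝ)
    (hf : Differentiable ℝ f) (hg : Differentiable ℝ g)
    (p m : ℝ × ℝ × ℝ) :
    fderiv ℝ (fun q => c₁ * f q + c₂ * g q) p m
      = c₁ * fderiv ℝ f p m + c₂ * fderiv ℝ g p m := by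
  rw [fderiv_fun_add ((hf p).const_mul c₁) ((hg p).const_mul c₂),
    fderiv_const_mul (hf p), fderiv_const_mul (hg p)]
  simp

lemma diff_pd (f : ℝ × ℝ × ℝ → ℝ) (hf : ContDiff ℝ 2 f) (m : ℝ × ℝ × ℝ) :
    Differentiable ℝ (fun p => fderiv ℝ f p m) := by
  have h1 : ContDiff ℝ 1 (fderiv ℝ f) := hf.fderiv_right (by norm_num)
  exact (h1.clm_apply contDiff_const).differentiable one_ne_zero

/-- Extra symmetry for equal diffusivities `d₁ = d₃` (finite form of `(u+w)∂_w`):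
if `(u,v,w)` solves `S(Ψ; d₁,d₂,d₁; k)` on an open set `Ω`, then for every real `ε`
the triple `(u, v, e^ε·w + (e^ε − 1)·u)` also solves `S(Ψ; d₁,d₂,d₁; k)` on `Ω`. -/
theorem extra_symmetry_d1_eq_d3
    (d₁ d₂ k : ℝ) (Ψ : ℝ × ℝ → ℝ) (hΨ : ContDiff ℝ 1 Ψ)
    (Ω : Set (ℝ × ℝ × ℝ)) (hΩ : IsOpen Ω)
    (u v w : ℝ × ℝ × ℝ → ℝ)
    (hu : ContDiff ℝ 2 u) (hv : ContDiff ℝ 2 v) (hw : ContDiff ℝ 2 w)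
    (h : SolvesS Ψ d₁ d₂ d₁ k u v w Ω) :
    ∀ ε : ℝ,
      SolvesS Ψ d₁ d₂ d₁ k u v
        (fun p => Real.exp ε * w p + (Real.exp ε - 1) * u p) Ω := by
  intro ε p hp
  obtain ⟨h1, h2, h3⟩ := h p hp
  refine ⟨h1, h2, ?_⟩
  set a := Real.exp ε with ha
  set b := Real.exp ε - 1 with hb
  have hdu : Differentiable ℝ u := hu.differentiable (by norm_num)
  have hdw : Differentiable ℝ w := hw.differentiable (by norm_num)
  have hxfun : pdX (fun q => a * w q + b * u q) = fun q => a * pdX w q + b * pdX u q :=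
    funext fun q => pd_comb a b w u hdw hdu q _
  have hyfun : pdY (fun q => a * w q + b * u q) = fun q => a * pdY w q + b * pdY u q :=
    funext fun q => pd_comb a b w u hdw hdu q _
  have hT : pdT (fun q => a * w q + b * u q) p = a * pdT w p + b * pdT u p :=
    pd_comb a b w u hdw hdu p _
  have hX : pdX (fun q => a * w q + b * u q) p = a * pdX w p + b * pdX u p :=
    pd_comb a b w u hdw hdu p _
  have hY : pdY (fun q => a * w q + b * u q) p = a * pdY w p + b * pdY u p :=
    pd_comb a b w u hdw hdu p _
  have hXX : pdX (pdX (fun q => a * w q + b * u q)) p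
      = a * pdX (pdX w) p + b * pdX (pdX u) p := by
    rw [hxfun]
    exact pd_comb a b (pdX w) (pdX u) (diff_pd w hw _) (diff_pd u hu _) p _
  have hYY : pdY (pdY (fun q => a * w q + b * u q)) p
      = a * pdY (pdY w) p + b * pdY (pdY u) p := by
    rw [hyfun]
    exact pd_comb a b (pdY w) (pdY u) (diff_pd w hw _) (diff_pd u hu _) p _
  rw [hT, hX, hY, hXX, hYY]
  have hab : a - b = 1 := by rw [ha, hb]; ring
  linear_combination a * h3 + b * h1 + (k * u p * v p) * hab
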